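/- arXiv:2301.04981 — 5 statements merged into one kernel-verified Lean document; each statement's English description precedes it below -/
import Mathlib

section
/- Let U be an N×N complex unitary matrix, k ≤ N, and P_k = (I_k | 0) ∈ C^{k×N} the projection onto the first k coordinates. Let Q ∈ R^{2k×N} be the real matrix whose top k×N block is Re(P_k U) and whose bottom k×N block is −Im(P_k U). If m_1 ≤ … ≤ m_{2k} are the singular values of Q, then m_{2k} ≤ 1 and m_{k+1} ≥ 1/√(k+1). -/
open Matrix

/-- For a unitary `U`, the real `2k × N` matrix `Q` with blocks
`Re(P_k U)` and `-Im(P_k U)` has largest singular value `m_{2k} ≤ 1` and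
`(k+1)`-st smallest singular value `m_{k+1} ≥ 1/√(k+1)`. -/
theorem singular_values_of_realified_unitary_block (N k : ℕ) (hk1 : 1 ≤ k) (hkN : k ≤ N)
    (U : Matrix (Fin N) (Fin N) ℂ) (hU : U ∈ Matrix.unitaryGroup (Fin N) ℂ)
    (Q : Matrix (Fin (2 * k)) (Fin N) ℝ)
    (hQtop : ∀ (i : Fin k) (j : Fin N),
      Q ⟨i, by have := i.2; omega⟩ j = (U (Fin.castLE hkN i) j).re)
    (hQbot : ∀ (i : Fin k) (j : Fin N),
      Q ⟨k + i, by have := i.2; omega⟩ j = -(U (Fin.castLE hkN i) j).im)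
    (hQQ : (Q * Qᵀ).IsHermitian)
    (m : Fin (2 * k) → ℝ) (hmono : Monotone m) (hnn : ∀ i, 0 ≤ m i)
    (hm : ∃ e : Fin (2 * k) ≃ Fin (2 * k), ∀ i, m i ^ 2 = hQQ.eigenvalues (e i)) :
    m ⟨2 * k - 1, by omega⟩ ≤ 1 ∧ 1 / Real.sqrt (k + 1) ≤ m ⟨k, by omega⟩ := by
  classical
  -- unitary row identities
  have hU1 : ∀ a b : Fin N, ∑ j, U a j * (starRingEnd ℂ) (U b j) = if a = b then 1 else 0 := by
    intro a b
    have h2 := congrFun (congrFun (Matrix.mem_unitaryGroup_iff.mp hU) a) b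
    simpa [Matrix.mul_apply, Matrix.one_apply, Matrix.conjTranspose_apply,
      star_eq_conjTranspose] using h2
  have hre : ∀ a b : Fin N,
      ∑ j, ((U a j).re * (U b j).re + (U a j).im * (U b j).im)
        = if a = b then (1:ℝ) else 0 := by
    intro a b
    calc ∑ j, ((U a j).re * (U b j).re + (U a j).im * (U b j).im)
        = ∑ j, (U a j * (starRingEnd ℂ) (U b j)).re :=
          Finset.sum_congr rfl fun j _ => by simp [Complex.mul_re]; try ring
      _ = (∑ j, U a j * (starRingEnd ℂ) (U b j)).re := (Complex.re_sum _ _).symm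
      _ = _ := by rw [hU1 a b]; split <;> simp
  have him : ∀ a b : Fin N,
      ∑ j, ((U a j).im * (U b j).re - (U a j).re * (U b j).im) = 0 := by
    intro a b
    calc ∑ j, ((U a j).im * (U b j).re - (U a j).re * (U b j).im)
        = ∑ j, (U a j * (starRingEnd ℂ) (U b j)).im :=
          Finset.sum_congr rfl fun j _ => by simp [Complex.mul_im]; try ring
      _ = (∑ j, U a j * (starRingEnd ℂ) (U b j)).im := (Complex.im_sum _ _).symm
      _ = 0 := by rw [hU1 a b]; split <;> simp
  -- the row-index folding map
  set w : Fin (2*k) → Fin N := fun i =>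
    ⟨if (i:ℕ) < k then (i:ℕ) else (i:ℕ) - k, by have := i.2; split <;> omega⟩ with hw
  -- entries of Q in terms of w
  have hwv1 : ∀ (i : Fin (2*k)), (i:ℕ) < k → ((w i : ℕ) = (i:ℕ)) := by
    intro i h; simp [hw, h]
  have hwv2 : ∀ (i : Fin (2*k)), k ≤ (i:ℕ) → ((w i : ℕ) = (i:ℕ) - k) := by
    intro i h; simp [hw, Nat.not_lt.mpr h]
  have hQ' : ∀ (i : Fin (2*k)) (j : Fin N),
      Q i j = if (i:ℕ) < k then (U (w i) j).re else -(U (w i) j).im := by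
    intro i j
    by_cases h : (i:ℕ) < k
    · rw [if_pos h]
      have h2 := hQtop ⟨(i:ℕ), h⟩ j
      have e1 : (⟨((⟨(i:ℕ), h⟩ : Fin k) : ℕ), by omega⟩ : Fin (2*k)) = i := Fin.ext rfl
      rw [e1] at h2
      rw [h2, show Fin.castLE hkN ⟨(i:ℕ), h⟩ = w i from Fin.ext (by simp [hwv1 i h, h])]
    · rw [if_neg h]
      have hk2 : (i:ℕ) - k < k := by have := i.2; omega
      have h2 := hQbot ⟨(i:ℕ) - k, hk2⟩ j
      have e1 : (⟨k + ((⟨(i:ℕ) - k, hk2⟩ : Fin k) : ℕ), by omega⟩ : Fin (2*k)) = i :=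
        Fin.ext (by simp; omega)
      rw [e1] at h2
      rw [h2, show Fin.castLE hkN ⟨(i:ℕ) - k, hk2⟩ = w i from
        Fin.ext (by simp [hwv2 i (Nat.not_lt.mp h), h])]
  -- companion matrix R
  set R : Matrix (Fin (2*k)) (Fin N) ℝ := Matrix.of fun i j =>
    if (i:ℕ) < k then (U (w i) j).im else (U (w i) j).re with hR
  have hR' : ∀ (i : Fin (2*k)) (j : Fin N),
      R i j = if (i:ℕ) < k then (U (w i) j).im else (U (w i) j).re := fun i j => rfl
  -- the key identity
  have hsum : Q * Qᵀ + R * Rᵀ = 1 := by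
    ext i i'
    simp only [Matrix.add_apply, Matrix.mul_apply, Matrix.transpose_apply, Matrix.one_apply]
    rw [← Finset.sum_add_distrib]
    rcases lt_or_ge (i:ℕ) k with hi | hi <;> rcases lt_or_ge (i':ℕ) k with hi' | hi'
    · have hterm : ∀ j, Q i j * Q i' j + R i j * R i' j
          = (U (w i) j).re * (U (w i') j).re + (U (w i) j).im * (U (w i') j).im := fun j => by
        rw [hQ' i j, hQ' i' j, hR' i j, hR' i' j, if_pos hi, if_pos hi', if_pos hi, if_pos hi']
      rw [Finset.sum_congr rfl fun j _ => hterm j, hre]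
      have hiff : (w i = w i') ↔ (i = i') := by
        rw [Fin.ext_iff, Fin.ext_iff, hwv1 i hi, hwv1 i' hi']
      simp only [hiff]
    · have hterm : ∀ j, Q i j * Q i' j + R i j * R i' j
          = (U (w i) j).im * (U (w i') j).re - (U (w i) j).re * (U (w i') j).im := fun j => by
        rw [hQ' i j, hQ' i' j, hR' i j, hR' i' j, if_pos hi, if_neg (not_lt.mpr hi'),
          if_pos hi, if_neg (not_lt.mpr hi')]
        ring
      rw [Finset.sum_congr rfl fun j _ => hterm j, him,
        if_neg (show ¬ i = i' by rintro rfl; omega)]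
    · have hterm : ∀ j, Q i j * Q i' j + R i j * R i' j
          = -((U (w i) j).im * (U (w i') j).re - (U (w i) j).re * (U (w i') j).im) := fun j => by
        rw [hQ' i j, hQ' i' j, hR' i j, hR' i' j, if_neg (not_lt.mpr hi), if_pos hi',
          if_neg (not_lt.mpr hi), if_pos hi']
        ring
      rw [Finset.sum_congr rfl fun j _ => hterm j, Finset.sum_neg_distrib, him, neg_zero,
        if_neg (show ¬ i = i' by rintro rfl; omega)]
    · have hterm : ∀ j, Q i j * Q i' j + R i j * R i' j
          = (U (w i) j).re * (U (w i') j).re + (U (w i) j).im * (U (w i') j).im := fun j => by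
        rw [hQ' i j, hQ' i' j, hR' i j, hR' i' j, if_neg (not_lt.mpr hi),
          if_neg (not_lt.mpr hi'), if_neg (not_lt.mpr hi), if_neg (not_lt.mpr hi')]
        ring
      rw [Finset.sum_congr rfl fun j _ => hterm j, hre]
      have hiff : (w i = w i') ↔ (i = i') := by
        rw [Fin.ext_iff, Fin.ext_iff, hwv2 i hi, hwv2 i' hi']
        omega
      simp only [hiff]
  -- positive semidefiniteness facts
  have hpsdQ : (Q * Qᵀ).PosSemidef := by
    simpa [Matrix.conjTranspose_eq_transpose_of_trivial] using
      Matrix.posSemidef_self_mul_conjTranspose Q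
  have hpsd1 : (1 - Q * Qᵀ).PosSemidef := by
    have h1 : 1 - Q * Qᵀ = R * Rᵀ := by rw [← hsum, add_sub_cancel_left]
    rw [h1]
    simpa [Matrix.conjTranspose_eq_transpose_of_trivial] using
      Matrix.posSemidef_self_mul_conjTranspose R
  -- eigenvalues in [0, 1]
  have hev0 : ∀ i, 0 ≤ hQQ.eigenvalues i := fun i => hpsdQ.eigenvalues_nonneg i
  have hev1 : ∀ i, hQQ.eigenvalues i ≤ 1 := by
    intro i
    set v : (Fin (2*k)) → ℝ := ⇑(hQQ.eigenvectorBasis i) with hv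
    have hmul : (Q * Qᵀ) *ᵥ v = hQQ.eigenvalues i • v := hQQ.mulVec_eigenvectorBasis i
    have hps := hpsd1.dotProduct_mulVec_nonneg v
    have hvne : v ≠ 0 := by
      intro h
      exact hQQ.eigenvectorBasis.orthonormal.ne_zero i (by ext j; exact congrFun h j)
    have hvv : 0 < v ⬝ᵥ v := by
      obtain ⟨j0, hj0⟩ : ∃ j, v j ≠ 0 := by
        by_contra hcon
        push_neg at hcon
        exact hvne (funext hcon)
      exact Finset.sum_pos' (fun j _ => mul_self_nonneg _)
        ⟨j0, Finset.mem_univ _, mul_self_pos.mpr hj0⟩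
    have hdot : star v ⬝ᵥ ((1 - Q * Qᵀ) *ᵥ v) = (1 - hQQ.eigenvalues i) * (v ⬝ᵥ v) := by
      rw [Matrix.sub_mulVec, Matrix.one_mulVec, hmul]
      simp only [star_trivial, dotProduct_sub, dotProduct_smul, smul_eq_mul]
      ring
    rw [hdot] at hps
    nlinarith [hps, hvv]
  -- sum splitting over Fin (2*k)
  have hsplit : ∀ f : Fin (2*k) → ℝ,
      ∑ i, f i = ∑ a : Fin k, (f ⟨(a:ℕ), by have := a.2; omega⟩
        + f ⟨k + (a:ℕ), by have := a.2; omega⟩) := by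
    intro f
    rw [← Equiv.sum_comp (finSumFinEquiv.trans (finCongr (two_mul k).symm)) f,
      Fintype.sum_sum_type, ← Finset.sum_add_distrib]
    refine Finset.sum_congr rfl fun a _ => ?_
    have e1 : (finSumFinEquiv.trans (finCongr (two_mul k).symm)) (Sum.inl a)
        = (⟨(a:ℕ), by have := a.2; omega⟩ : Fin (2*k)) := Fin.ext (by simp [Nat.add_comm])
    have e2 : (finSumFinEquiv.trans (finCongr (two_mul k).symm)) (Sum.inr a)
        = (⟨k + (a:ℕ), by have := a.2; omega⟩ : Fin (2*k)) := Fin.ext (by simp; omega)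
    rw [e1, e2]
  -- trace computation
  have htr : ∑ i, hQQ.eigenvalues i = (k : ℝ) := by
    have h1 : Matrix.trace (Q * Qᵀ) = ∑ i, hQQ.eigenvalues i := by
      conv_lhs => rw [hQQ.spectral_theorem, Unitary.conjStarAlgAut_apply]
      rw [Matrix.trace_mul_comm, ← Matrix.mul_assoc,
        show (star (hQQ.eigenvectorUnitary : Matrix (Fin (2*k)) (Fin (2*k)) ℝ)) *
          (hQQ.eigenvectorUnitary : Matrix (Fin (2*k)) (Fin (2*k)) ℝ) = 1 from
          Matrix.mem_unitaryGroup_iff'.mp (hQQ.eigenvectorUnitary).2, Matrix.one_mul,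
        Matrix.trace_diagonal]
      simp
    have h2 : Matrix.trace (Q * Qᵀ) = (k : ℝ) := by
      have hdiag : Matrix.trace (Q * Qᵀ) = ∑ i : Fin (2*k), ∑ j, Q i j * Q i j := by
        simp [Matrix.trace, Matrix.diag, Matrix.mul_apply]
      rw [hdiag, hsplit (fun i => ∑ j, Q i j * Q i j)]
      have hrow : ∀ a : Fin k,
          ((∑ j, Q ⟨(a:ℕ), by have := a.2; omega⟩ j * Q ⟨(a:ℕ), by have := a.2; omega⟩ j)
           + ∑ j, Q ⟨k + (a:ℕ), by have := a.2; omega⟩ j * Q ⟨k + (a:ℕ), by have := a.2; omega⟩ j)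
          = 1 := by
        intro a
        set i₁ : Fin (2*k) := ⟨(a:ℕ), by have := a.2; omega⟩ with hi₁
        set i₂ : Fin (2*k) := ⟨k + (a:ℕ), by have := a.2; omega⟩ with hi₂
        have h₁ : ((i₁:ℕ) < k) := a.isLt
        have h₂ : ¬ ((i₂:ℕ) < k) := by simp [hi₂]
        have hww : w i₁ = w i₂ := Fin.ext (by rw [hwv1 i₁ h₁, hwv2 i₂ (Nat.not_lt.mp h₂)]; simp [hi₁, hi₂])
        have hterm : ∀ j, Q i₁ j * Q i₁ j + Q i₂ j * Q i₂ j
            = (U (w i₂) j).re * (U (w i₂) j).re + (U (w i₂) j).im * (U (w i₂) j).im := fun j => by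
          rw [hQ' i₁ j, hQ' i₂ j, if_pos h₁, if_neg h₂, hww]
          ring
        rw [← Finset.sum_add_distrib, Finset.sum_congr rfl fun j _ => hterm j,
          hre, if_pos rfl]
      rw [Finset.sum_congr rfl fun a _ => hrow a]
      simp
    rw [← h1, h2]
  -- conclusion
  obtain ⟨e, he⟩ := hm
  have hsq1 : ∀ i, m i ^ 2 ≤ 1 := fun i => (he i) ▸ hev1 (e i)
  have hle1 : ∀ i, m i ≤ 1 := fun i => by nlinarith [hsq1 i, hnn i]
  have hsum2 : ∑ i, m i ^ 2 = (k : ℝ) := by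
    rw [Finset.sum_congr rfl fun i _ => he i, Equiv.sum_comp e hQQ.eigenvalues, htr]
  refine ⟨hle1 _, ?_⟩
  by_contra hcon
  push_neg at hcon
  set b : Fin (2*k) := ⟨k, by omega⟩ with hb
  have hsqk : m b ^ 2 < 1 / ((k:ℝ) + 1) := by
    have h1 : (0:ℝ) < (k:ℝ) + 1 := by positivity
    have h2 : m b ^ 2 < (1 / Real.sqrt ((k:ℝ) + 1)) ^ 2 :=
      pow_lt_pow_left₀ hcon (hnn b) two_ne_zero
    calc m b ^ 2 < (1 / Real.sqrt ((k:ℝ) + 1)) ^ 2 := h2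
      _ = 1 / ((k:ℝ) + 1) := by
          rw [div_pow, one_pow, Real.sq_sqrt h1.le]
  have hlt : ∑ i, m i ^ 2 < ∑ i : Fin (2*k), (if i ≤ b then 1 / ((k:ℝ)+1) else 1) := by
    apply Finset.sum_lt_sum
    · intro i _
      by_cases h : i ≤ b
      · rw [if_pos h]
        exact le_of_lt (lt_of_le_of_lt (pow_le_pow_left₀ (hnn i) (hmono h) 2) hsqk)
      · rw [if_neg h]
        exact hsq1 i
    · exact ⟨b, Finset.mem_univ _, by rw [if_pos le_rfl]; exact hsqk⟩
  have hcard : (Finset.univ.filter fun i : Fin (2*k) => i ≤ b).card = k + 1 := by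
    rw [Finset.filter_ge_eq_Iic, Fin.card_Iic]
  have hcard2 : (Finset.univ.filter fun i : Fin (2*k) => ¬ i ≤ b).card = k - 1 := by
    have := Finset.card_filter_add_card_filter_not (s := (Finset.univ : Finset (Fin (2*k))))
      (p := fun i => i ≤ b)
    simp only [Finset.card_univ, Fintype.card_fin] at this
    omega
  have hgsum : ∑ i : Fin (2*k), (if i ≤ b then 1 / ((k:ℝ)+1) else 1) = (k:ℝ) := by
    rw [Finset.sum_ite, Finset.sum_const, Finset.sum_const, hcard, hcard2]
    have h1 : ((k:ℝ) + 1) ≠ 0 := by positivity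
    have h2 : ((k - 1 : ℕ) : ℝ) = (k:ℝ) - 1 := by
      have : (1:ℕ) ≤ k := hk1
      push_cast [Nat.cast_sub this]
      ring
    simp only [nsmul_eq_mul, smul_eq_mul, mul_one, h2]
    push_cast
    field_simp
    try ring
  rw [hsum2, hgsum] at hlt
  exact lt_irrefl _ hlt
end

section
/- Let Y, B be real N×N matrices, J the (N−1)×N matrix deleting the first row, and v ∈ C^N a unit null vector of J(Y + iB). Let w ∈ R^N be the unit null vector of JB and assume λ_1(B), the smallest singular value of B, is positive. Then for every θ ∈ [0, 2π], λ_1(B)^2 · (1 − |w^* v|^2) ≤ (‖JY‖ + ‖B‖)^2 · ‖Re(e^{iθ} v)‖^2. -/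
open Matrix

/-- Euclidean norm of a real vector. -/
noncomputable def rnorm {n : Type*} [Fintype n] (v : n → ℝ) : ℝ :=
  Real.sqrt (∑ i, v i ^ 2)

/-- Euclidean norm of a complex vector. -/
noncomputable def cnorm {n : Type*} [Fintype n] (v : n → ℂ) : ℝ :=
  Real.sqrt (∑ i, Complex.normSq (v i))

/-- Operator norm of a real matrix. -/
noncomputable def ropNorm {m n : Type*} [Fintype m] [Fintype n] (M : Matrix m n ℝ) : ℝ :=
  sSup {c | ∃ v : n → ℝ, rnorm v ≤ 1 ∧ c = rnorm (M.mulVec v)}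

/-- Smallest singular value of a real square matrix. -/
noncomputable def smin {n : Type*} [Fintype n] (M : Matrix n n ℝ) : ℝ :=
  sInf {c | ∃ v : n → ℝ, rnorm v = 1 ∧ c = rnorm (M.mulVec v)}

/-- The `(N-1) × N` matrix deleting the first row. -/
def delRow (N : ℕ) (R : Type*) [Zero R] [One R] : Matrix (Fin (N - 1)) (Fin N) R :=
  fun i j => if (j : ℕ) = (i : ℕ) + 1 then 1 else 0

lemma rnorm_nonneg {n : Type*} [Fintype n] (v : n → ℝ) : 0 ≤ rnorm v := Real.sqrt_nonneg _
lemma rnorm_sq {n : Type*} [Fintype n] (v : n → ℝ) : rnorm v ^ 2 = ∑ i, v i ^ 2 := by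
  rw [rnorm, Real.sq_sqrt (Finset.sum_nonneg fun i _ => sq_nonneg _)]
lemma rnorm_zero {n : Type*} [Fintype n] : rnorm (0 : n → ℝ) = 0 := by
  simp [rnorm]
lemma rnorm_smul {n : Type*} [Fintype n] (c : ℝ) (v : n → ℝ) :
    rnorm (c • v) = |c| * rnorm v := by
  simp only [rnorm, Pi.smul_apply, smul_eq_mul, mul_pow, ← Finset.mul_sum]
  rw [Real.sqrt_mul (sq_nonneg c), Real.sqrt_sq_eq_abs]
lemma rnorm_le_rnorm {n : Type*} [Fintype n] (u v : n → ℝ)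
    (h : ∑ i, u i ^ 2 ≤ ∑ i, v i ^ 2) : rnorm u ≤ rnorm v := Real.sqrt_le_sqrt h
lemma rnorm_pos {n : Type*} [Fintype n] {v : n → ℝ} (h : v ≠ 0) : 0 < rnorm v := by
  rcases lt_or_eq_of_le (rnorm_nonneg v) with h1 | h1
  · exact h1
  · exfalso; apply h
    have h2 : ∑ i, v i ^ 2 = 0 := by
      have := rnorm_sq v; rw [← h1] at this; simpa using this.symm
    funext i
    have := (Finset.sum_eq_zero_iff_of_nonneg (fun i _ => sq_nonneg (v i))).1 h2 i (Finset.mem_univ i)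
    exact pow_eq_zero_iff (by norm_num) |>.1 this

lemma smin_le {n : Type*} [Fintype n] (M : Matrix n n ℝ) {v : n → ℝ} (hv : rnorm v = 1) :
    smin M ≤ rnorm (M.mulVec v) := by
  apply csInf_le
  · exact ⟨0, fun c ⟨u, _, hc⟩ => hc ▸ rnorm_nonneg _⟩
  · exact ⟨v, hv, rfl⟩

lemma smin_mul_le {n : Type*} [Fintype n] (M : Matrix n n ℝ) (v : n → ℝ) :
    smin M * rnorm v ≤ rnorm (M.mulVec v) := by
  by_cases h : v = 0
  · simp [h, rnorm_zero, Matrix.mulVec_zero, rnorm_nonneg]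
  · have hp := rnorm_pos h
    have hu : rnorm ((rnorm v)⁻¹ • v) = 1 := by
      rw [rnorm_smul, abs_of_pos (inv_pos.2 hp), inv_mul_cancel₀ hp.ne']
    have := smin_le M hu
    rw [Matrix.mulVec_smul, rnorm_smul, abs_of_pos (inv_pos.2 hp)] at this
    calc smin M * rnorm v ≤ ((rnorm v)⁻¹ * rnorm (M.mulVec v)) * rnorm v := by
          exact mul_le_mul_of_nonneg_right this hp.le
      _ = rnorm (M.mulVec v) := by field_simp

lemma ropNorm_mem_bound {m n : Type*} [Fintype m] [Fintype n] (M : Matrix m n ℝ)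
    {v : n → ℝ} (hv : rnorm v ≤ 1) :
    rnorm (M.mulVec v) ≤ Real.sqrt (∑ i, ∑ j, M i j ^ 2) := by
  apply Real.sqrt_le_sqrt
  have hv2 : ∑ j, v j ^ 2 ≤ 1 := by
    have := rnorm_sq v
    nlinarith [rnorm_nonneg v]
  calc ∑ i, (M.mulVec v) i ^ 2 = ∑ i, (∑ j, M i j * v j) ^ 2 := rfl
    _ ≤ ∑ i, (∑ j, M i j ^ 2) * (∑ j, v j ^ 2) := by
        apply Finset.sum_le_sum
        intro i _
        exact Finset.sum_mul_sq_le_sq_mul_sq _ _ _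
    _ ≤ ∑ i, ∑ j, M i j ^ 2 := by
        apply Finset.sum_le_sum
        intro i _
        have h1 : 0 ≤ ∑ j, M i j ^ 2 := Finset.sum_nonneg fun j _ => sq_nonneg _
        nlinarith

lemma ropNorm_bddAbove {m n : Type*} [Fintype m] [Fintype n] (M : Matrix m n ℝ) :
    BddAbove {c | ∃ v : n → ℝ, rnorm v ≤ 1 ∧ c = rnorm (M.mulVec v)} :=
  ⟨Real.sqrt (∑ i, ∑ j, M i j ^ 2), fun c ⟨u, hu, hc⟩ => hc ▸ ropNorm_mem_bound M hu⟩

lemma le_ropNorm {m n : Type*} [Fintype m] [Fintype n] (M : Matrix m n ℝ)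
    {v : n → ℝ} (hv : rnorm v ≤ 1) : rnorm (M.mulVec v) ≤ ropNorm M :=
  le_csSup (ropNorm_bddAbove M) ⟨v, hv, rfl⟩

lemma ropNorm_nonneg {m n : Type*} [Fintype m] [Fintype n] (M : Matrix m n ℝ) :
    0 ≤ ropNorm M := by
  have := le_ropNorm M (v := 0) (by simp [rnorm_zero])
  exact le_trans (rnorm_nonneg _) this

lemma rnorm_mulVec_le {m n : Type*} [Fintype m] [Fintype n] (M : Matrix m n ℝ) (v : n → ℝ) :
    rnorm (M.mulVec v) ≤ ropNorm M * rnorm v := by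
  by_cases h : v = 0
  · simp [h, rnorm_zero, Matrix.mulVec_zero]
  · have hp := rnorm_pos h
    have hu : rnorm ((rnorm v)⁻¹ • v) ≤ 1 := by
      rw [rnorm_smul, abs_of_pos (inv_pos.2 hp), inv_mul_cancel₀ hp.ne']
    have := le_ropNorm M hu
    rw [Matrix.mulVec_smul, rnorm_smul, abs_of_pos (inv_pos.2 hp)] at this
    calc rnorm (M.mulVec v) = ((rnorm v)⁻¹ * rnorm (M.mulVec v)) * rnorm v := by field_simp
      _ ≤ ropNorm M * rnorm v := mul_le_mul_of_nonneg_right this hp.le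

lemma delRow_mul_apply {R : Type*} [NonAssocSemiring R] {n : ℕ}
    (M : Matrix (Fin (n+1)) (Fin (n+1)) R) (i : Fin n) (j : Fin (n+1)) :
    (delRow (n+1) R * M) i j = M ⟨i.1+1, by omega⟩ j := by
  rw [Matrix.mul_apply]
  rw [Finset.sum_eq_single (⟨i.1+1, by omega⟩ : Fin (n+1))]
  · simp [delRow]
  · intro k _ hk
    simp only [delRow, ite_mul, one_mul, zero_mul]
    rw [if_neg]
    intro h
    exact hk (Fin.ext h)
  · intro h; exact absurd (Finset.mem_univ _) h

lemma delRow_mulVec {R : Type*} [NonAssocSemiring R] {n : ℕ}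
    (M : Matrix (Fin (n+1)) (Fin (n+1)) R) (u : Fin (n+1) → R) (i : Fin n) :
    ((delRow (n+1) R * M).mulVec u) i = (M.mulVec u) ⟨i.1+1, by omega⟩ := by
  simp only [Matrix.mulVec, dotProduct, delRow_mul_apply]

set_option maxHeartbeats 1000000 in
/-- If `v` is a unit null vector of `J(Y + iB)` and `w` the unit
null vector of `JB`, then for all `θ ∈ [0,2π]`,
`λ₁(B)² (1 - |w^*v|²) ≤ (‖JY‖ + ‖B‖)² ‖Re(e^{iθ} v)‖²`. -/
theorem real_part_lower_bound_of_complex_null_vector (N : ℕ) (hN : 1 ≤ N)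
    (Y B : Matrix (Fin N) (Fin N) ℝ)
    (v : Fin N → ℂ) (hv : cnorm v = 1)
    (hnull : ((delRow N ℂ) *
        (Y.map (fun x => (x : ℂ)) + Complex.I • B.map (fun x => (x : ℂ)))).mulVec v = 0)
    (w : Fin N → ℝ) (hw : rnorm w = 1)
    (hwnull : ((delRow N ℝ) * B).mulVec w = 0)
    (hB : 0 < smin B)
    (θ : ℝ) (hθ : θ ∈ Set.Icc 0 (2 * Real.pi)) :
    smin B ^ 2 * (1 - Complex.normSq (∑ i, (w i : ℂ) * v i))
      ≤ (ropNorm ((delRow N ℝ) * Y) + ropNorm B) ^ 2 *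
          (∑ i, (Complex.exp (θ * Complex.I) * v i).re ^ 2) := by
  obtain ⟨n, rfl⟩ : ∃ n, N = n + 1 := ⟨N - 1, by omega⟩
  set e : ℂ := Complex.exp (θ * Complex.I) with he
  have he1 : Complex.normSq e = 1 := by
    have h : ‖e‖ = 1 := by
      rw [he, Complex.norm_exp]; simp
    rw [← Complex.sq_norm, h]; norm_num
  set x : Fin (n+1) → ℝ := fun i => (e * v i).re with hx
  set y : Fin (n+1) → ℝ := fun i => (e * v i).im with hy
  set α : ℝ := ∑ i, w i * x i with hα
  set β : ℝ := ∑ i, w i * y i with hβ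
  have hw2 : ∑ i, w i ^ 2 = 1 := by
    have h := rnorm_sq w; rw [hw] at h; linarith [h]
  have hv2 : ∑ i, (x i ^ 2 + y i ^ 2) = 1 := by
    have h1 : ∑ i, Complex.normSq (v i) = 1 := by
      have h := hv
      rw [cnorm] at h
      nlinarith [Real.sq_sqrt (Finset.sum_nonneg fun i (_ : i ∈ Finset.univ) =>
        Complex.normSq_nonneg (v i)), h]
    rw [← h1]
    apply Finset.sum_congr rfl
    intro i _
    have h2 : Complex.normSq (e * v i) = Complex.normSq (v i) := by
      rw [Complex.normSq_mul, he1, one_mul]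
    rw [← h2, Complex.normSq_apply]
    simp only [hx, hy]
    ring
  have hwv : Complex.normSq (∑ i, (w i : ℂ) * v i) = α ^ 2 + β ^ 2 := by
    have h1 : Complex.normSq (∑ i, (w i : ℂ) * v i)
        = Complex.normSq (e * ∑ i, (w i : ℂ) * v i) := by
      rw [Complex.normSq_mul, he1, one_mul]
    rw [h1]
    have h2 : e * ∑ i, (w i : ℂ) * v i = ∑ i, (w i : ℂ) * (e * v i) := by
      rw [Finset.mul_sum]; apply Finset.sum_congr rfl; intros; ring
    rw [h2, Complex.normSq_apply, Complex.re_sum, Complex.im_sum]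
    have hre : ∀ i, ((w i : ℂ) * (e * v i)).re = w i * x i := by
      intro i; simp [hx, Complex.mul_re]
    have him : ∀ i, ((w i : ℂ) * (e * v i)).im = w i * y i := by
      intro i; simp [hy, Complex.mul_im]
    rw [Finset.sum_congr rfl (fun i _ => hre i), Finset.sum_congr rfl (fun i _ => him i)]
    rw [hα, hβ]; ring
  have hker : ∀ i : Fin n, (B.mulVec y) ⟨i.1+1, by omega⟩ = (Y.mulVec x) ⟨i.1+1, by omega⟩ := by
    intro i
    have h0 : (((delRow (n+1) ℂ) *
        (Y.map (fun x => (x : ℂ)) + Complex.I • B.map (fun x => (x : ℂ)))).mulVec v) i = 0 := by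
      rw [hnull]; rfl
    rw [delRow_mulVec] at h0
    set k : Fin (n+1) := ⟨i.1+1, by omega⟩ with hk
    have h1 : ∑ j, ((Y k j : ℂ) + Complex.I * (B k j)) * v j = 0 := by
      rw [← h0]
      apply Finset.sum_congr rfl
      intro j _
      simp only [Matrix.add_apply, Matrix.map_apply, Matrix.smul_apply, smul_eq_mul]
    have h2 : ∑ j, ((Y k j : ℂ) + Complex.I * (B k j)) * (e * v j) = 0 := by
      have h := congrArg (fun z => e * z) h1
      simp only [Finset.mul_sum, mul_zero] at h
      rw [← h]
      apply Finset.sum_congr rfl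
      intros; ring
    have h3 := congrArg Complex.re h2
    rw [Complex.re_sum] at h3
    simp only [Complex.zero_re] at h3
    have h4 : ∀ j, (((Y k j : ℂ) + Complex.I * (B k j)) * (e * v j)).re
        = Y k j * x j - B k j * y j := by
      intro j
      rw [Complex.mul_re]
      simp [hx, hy]
    rw [Finset.sum_congr rfl (fun j _ => h4 j), Finset.sum_sub_distrib] at h3
    simp only [Matrix.mulVec, dotProduct]
    linarith
  have hwB : ∀ i : Fin n, (B.mulVec w) ⟨i.1+1, by omega⟩ = 0 := by
    intro i
    have h0 : (((delRow (n+1) ℝ) * B).mulVec w) i = 0 := by rw [hwnull]; rfl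
    rwa [delRow_mulVec] at h0
  set c : ℝ := (B.mulVec w) 0 with hc
  have hc0 : c ≠ 0 := by
    intro h
    have hBw : B.mulVec w = 0 := by
      funext j
      rcases Fin.eq_zero_or_eq_succ j with h0 | ⟨i, rfl⟩
      · rw [h0]; exact h
      · exact hwB i
    have h1 := smin_le B hw
    rw [hBw, rnorm_zero] at h1
    linarith
  set y' : Fin (n+1) → ℝ := fun i => y i - β * w i with hy'
  set t : ℝ := (B.mulVec y') 0 / c with ht
  set z : Fin (n+1) → ℝ := fun i => y' i - t * w i with hz
  have hy'1 : B.mulVec y' = B.mulVec y - β • B.mulVec w := by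
    have h1 : y' = y - β • w := rfl
    rw [h1, Matrix.mulVec_sub, Matrix.mulVec_smul]
  have hz1 : B.mulVec z = B.mulVec y - β • B.mulVec w - t • B.mulVec w := by
    have h1 : z = y' - t • w := rfl
    rw [h1, Matrix.mulVec_sub, Matrix.mulVec_smul, hy'1]
  have hz0 : (B.mulVec z) 0 = 0 := by
    have htc : t * c = (B.mulVec y) 0 - β * c := by
      rw [ht, div_mul_cancel₀ _ hc0, hy'1]
      simp [hc]
    simp only [hz1, Pi.sub_apply, Pi.smul_apply, smul_eq_mul, ← hc]
    linarith
  have hzs : ∀ i : Fin n, (B.mulVec z) ⟨i.1+1, by omega⟩ = (Y.mulVec x) ⟨i.1+1, by omega⟩ := by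
    intro i
    simp only [hz1, Pi.sub_apply, Pi.smul_apply, smul_eq_mul, hwB i, hker i]
    ring
  have hBz : rnorm (B.mulVec z) = rnorm (((delRow (n+1) ℝ) * Y).mulVec x) := by
    rw [rnorm, rnorm]
    congr 1
    rw [Fin.sum_univ_succ, hz0]
    simp only [ne_eq, OfNat.ofNat_ne_zero, not_false_eq_true, zero_pow, zero_add]
    apply Finset.sum_congr rfl
    intro i _
    rw [delRow_mulVec, ← hzs i]
    rfl
  have hy'w : ∑ i, y' i * w i = 0 := by
    have h1 : ∀ i ∈ Finset.univ, y' i * w i = w i * y i - β * w i ^ 2 := by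
      intro i _; simp only [hy']; ring
    rw [Finset.sum_congr rfl h1, Finset.sum_sub_distrib, ← Finset.mul_sum, hw2, ← hβ]
    ring
  have hzsq : ∑ i, z i ^ 2 = (∑ i, y' i ^ 2) + t ^ 2 := by
    have h1 : ∀ i ∈ Finset.univ, z i ^ 2
        = y' i ^ 2 - 2 * t * (y' i * w i) + t ^ 2 * w i ^ 2 := by
      intro i _; simp only [hz]; ring
    rw [Finset.sum_congr rfl h1, Finset.sum_add_distrib, Finset.sum_sub_distrib,
      ← Finset.mul_sum, ← Finset.mul_sum, hy'w, hw2]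
    ring
  have hy'sq : ∑ i, y' i ^ 2 = (∑ i, y i ^ 2) - β ^ 2 := by
    have h1 : ∀ i ∈ Finset.univ, y' i ^ 2
        = y i ^ 2 - 2 * β * (w i * y i) + β ^ 2 * w i ^ 2 := by
      intro i _; simp only [hy']; ring
    rw [Finset.sum_congr rfl h1, Finset.sum_add_distrib, Finset.sum_sub_distrib,
      ← Finset.mul_sum, ← Finset.mul_sum, hw2, ← hβ]
    ring
  have hxsq : α ^ 2 ≤ ∑ i, x i ^ 2 := by
    have h0 : (0:ℝ) ≤ ∑ i, (x i - α * w i) ^ 2 := Finset.sum_nonneg fun i _ => sq_nonneg _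
    have h1 : ∀ i ∈ Finset.univ, (x i - α * w i) ^ 2
        = x i ^ 2 - 2 * α * (w i * x i) + α ^ 2 * w i ^ 2 := by
      intro i _; ring
    rw [Finset.sum_congr rfl h1, Finset.sum_add_distrib, Finset.sum_sub_distrib,
      ← Finset.mul_sum, ← Finset.mul_sum, hw2, ← hα] at h0
    nlinarith
  have key : smin B * rnorm y' ≤ ropNorm ((delRow (n+1) ℝ) * Y) * rnorm x := by
    have h1 : rnorm y' ≤ rnorm z := by
      apply rnorm_le_rnorm
      rw [hzsq]; nlinarith [sq_nonneg t]
    calc smin B * rnorm y' ≤ smin B * rnorm z :=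
          mul_le_mul_of_nonneg_left h1 hB.le
      _ ≤ rnorm (B.mulVec z) := smin_mul_le B z
      _ = rnorm (((delRow (n+1) ℝ) * Y).mulVec x) := hBz
      _ ≤ ropNorm ((delRow (n+1) ℝ) * Y) * rnorm x := rnorm_mulVec_le _ x
  have hsB : smin B ≤ ropNorm B := by
    have h1 := smin_le B hw
    have h2 := rnorm_mulVec_le B w
    rw [hw, mul_one] at h2
    linarith
  have hy'n : rnorm y' ^ 2 = (∑ i, y i ^ 2) - β ^ 2 := by rw [rnorm_sq, hy'sq]
  have hxn : rnorm x ^ 2 = ∑ i, x i ^ 2 := rnorm_sq x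
  rw [Finset.sum_add_distrib] at hv2
  rw [hwv]
  have hJY := ropNorm_nonneg ((delRow (n+1) ℝ) * Y)
  have hx0 : (0:ℝ) ≤ ∑ i, x i ^ 2 := Finset.sum_nonneg fun i _ => sq_nonneg _
  have hy'0 : 0 ≤ rnorm y' := rnorm_nonneg y'
  have hx0' : 0 ≤ rnorm x := rnorm_nonneg x
  have key2 : (smin B * rnorm y') ^ 2 ≤ (ropNorm ((delRow (n+1) ℝ) * Y) * rnorm x) ^ 2 :=
    pow_le_pow_left₀ (by positivity) key 2
  rw [mul_pow, mul_pow, hy'n, hxn] at key2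
  have hBop : 0 ≤ ropNorm B := le_trans hB.le hsB
  have h1 : smin B ^ 2 ≤ ropNorm B ^ 2 := pow_le_pow_left₀ hB.le hsB 2
  have h2 : smin B ^ 2 * ((∑ i, x i ^ 2) - α ^ 2) ≤ ropNorm B ^ 2 * ∑ i, x i ^ 2 := by
    apply mul_le_mul h1 (by nlinarith [sq_nonneg α]) (by linarith) (by positivity)
  nlinarith [key2, h2, mul_nonneg (mul_nonneg hJY hBop) hx0]
end

section
/- Let Z ∈ C^{N×N}, j ∈ {1,…,N}, and let H^{(j−1)} be the Hermitization of Z with its first j−1 rows removed; let G^{(j−1)}(iη) be its resolvent. Then the (j,j) diagonal resolvent entry satisfies 1/G^{(j−1)}_{jj}(iη) = −iη − iη Σ_{i=1}^N (2 − 1(i ≤ j)) |e_j^* Z v_i^{(j)}|^2 / ((λ_i^{(j)})^2 + η^2), where λ_i^{(j)} and v_i^{(j)} are the singular values and right singular vectors of Z with its first j rows removed (with λ_i^{(j)} = 0 and ‖v_i^{(j)}‖ = 1 for i ≤ j, and ‖v_i^{(j)}‖^2 = 1/2 in the chosen normalization for i > j). In particular, |G^{(j−1)}_{jj}(iη)|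 = (η + Σ_i c_i |w_i|^2)^{−1} where c_i = η(2−1(i≤j))/((λ_i^{(j)})^2 + η^2)·N/N and w_i are the entries of the vector of overlaps of Z^* e_j with the singular vectors. -/
open Matrix

/-- The `(N-m) × N` matrix deleting the first `m` rows. -/
noncomputable def Jmat (N m : ℕ) : Matrix (Fin (N - m)) (Fin N) ℂ :=
  fun i j => if (j : ℕ) = (i : ℕ) + m then 1 else 0

/-- Hermitization of `Z` with its first `m` rows removed. -/
noncomputable def HermJ (N m : ℕ) (Z : Matrix (Fin N) (Fin N) ℂ) :
    Matrix (Fin (N - m) ⊕ Fin N) (Fin (N - m) ⊕ Fin N) ℂ :=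
  Matrix.fromBlocks 0 (Jmat N m * Z) (Jmat N m * Z)ᴴ 0


namespace SchurAux

variable {n : Type*} [Fintype n]

lemma vecMulVec_mul_mat (u w : n → ℂ) (M : Matrix n n ℂ) :
    vecMulVec u w * M = vecMulVec u (vecMul w M) := by
  ext p q
  simp only [Matrix.mul_apply, Matrix.vecMulVec_apply, Matrix.vecMul, dotProduct,
    Finset.mul_sum]
  exact Finset.sum_congr rfl fun k _ => mul_assoc _ _ _

lemma mat_mul_vecMulVec (M : Matrix n n ℂ) (u w : n → ℂ) :
    M * vecMulVec u w = vecMulVec (M.mulVec u) w := by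
  ext p q
  simp only [Matrix.mul_apply, Matrix.vecMulVec_apply, Matrix.mulVec, dotProduct,
    Finset.sum_mul]
  exact Finset.sum_congr rfl fun k _ => (mul_assoc _ _ _).symm

lemma vecMulVec_smul_right (u : n → ℂ) (c : ℂ) (w : n → ℂ) :
    vecMulVec u (c • w) = c • vecMulVec u w := by
  ext p q
  simp only [Matrix.vecMulVec_apply, Pi.smul_apply, Matrix.smul_apply, smul_eq_mul]
  ring

lemma vecMulVec_smul_left (c : ℂ) (u w : n → ℂ) :
    vecMulVec (c • u) w = c • vecMulVec u w := by
  ext p q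
  simp only [Matrix.vecMulVec_apply, Pi.smul_apply, Matrix.smul_apply, smul_eq_mul]
  ring

lemma vecMul_vecMulVec (u a b : n → ℂ) :
    vecMul u (vecMulVec a b) = (u ⬝ᵥ a) • b := by
  ext q
  simp only [Matrix.vecMul, dotProduct, Matrix.vecMulVec_apply, Pi.smul_apply,
    smul_eq_mul, Finset.sum_mul]
  exact Finset.sum_congr rfl fun k _ => by ring

lemma vecMulVec_mulVec (u w y : n → ℂ) :
    (vecMulVec u w).mulVec y = (w ⬝ᵥ y) • u := by
  ext p
  simp only [Matrix.mulVec, dotProduct, Matrix.vecMulVec_apply, Pi.smul_apply,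
    smul_eq_mul]
  rw [Finset.sum_mul]
  exact Finset.sum_congr rfl fun k _ => by ring

lemma sum_mulVec {ι : Type*} (s : Finset ι) (M : ι → Matrix n n ℂ) (x : n → ℂ) :
    (∑ i ∈ s, M i).mulVec x = ∑ i ∈ s, (M i).mulVec x := by
  ext p
  simp only [Matrix.mulVec, dotProduct, Finset.sum_apply, Matrix.sum_apply,
    Finset.sum_mul]
  exact Finset.sum_comm

lemma Jmat_mul_apply {N m : ℕ} (Z : Matrix (Fin N) (Fin N) ℂ) (i : Fin (N - m)) (p : Fin N)
    (h : (i : ℕ) + m < N) :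
    (Jmat N m * Z) i p = Z ⟨(i : ℕ) + m, h⟩ p := by
  rw [Matrix.mul_apply]
  rw [Finset.sum_eq_single (⟨(i : ℕ) + m, h⟩ : Fin N)]
  · simp [Jmat]
  · intro b _ hb
    simp only [Jmat]
    rw [if_neg, zero_mul]
    intro hc
    exact hb (Fin.ext hc)
  · intro hmem
    exact absurd (Finset.mem_univ _) hmem

lemma sum_shift (N m : ℕ) (g : ℕ → ℂ) :
    ∑ i : Fin (N - m), g ((i : ℕ) + m) = ∑ t ∈ Finset.Ico m N, g t := by
  rw [Finset.sum_Ico_eq_sum_range]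
  rw [Fin.sum_univ_eq_sum_range (fun i => g (i + m)) (N - m)]
  exact Finset.sum_congr rfl fun k _ => by rw [add_comm]

lemma JZJZ_entry (N mm : ℕ) (Z : Matrix (Fin N) (Fin N) ℂ) (p q : Fin N) :
    ((Jmat N mm * Z)ᴴ * (Jmat N mm * Z)) p q
      = ∑ t ∈ Finset.Ico mm N,
          (if h : t < N then (starRingEnd ℂ) (Z ⟨t, h⟩ p) * Z ⟨t, h⟩ q else 0) := by
  rw [← sum_shift N mm (fun t => if h : t < N then (starRingEnd ℂ) (Z ⟨t, h⟩ p) * Z ⟨t, h⟩ q else 0)]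
  rw [Matrix.mul_apply]
  refine Finset.sum_congr rfl fun i _ => ?_
  have h : (i : ℕ) + mm < N := by have := i.2; omega
  rw [Matrix.conjTranspose_apply, Jmat_mul_apply Z i p h, Jmat_mul_apply Z i q h, dif_pos h]
  rfl

lemma dot_sum {ι : Type*} (x : n → ℂ) (s : Finset ι) (y : ι → n → ℂ) :
    x ⬝ᵥ (∑ i ∈ s, y i) = ∑ i ∈ s, x ⬝ᵥ y i := by
  simp only [dotProduct, Finset.sum_apply, Finset.mul_sum]
  exact Finset.sum_comm

end SchurAux

open SchurAux in
set_option maxHeartbeats 1600000 in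
/-- **Schur complement identity.** Expression of the `(j,j)` diagonal
resolvent entry of the Hermitization of `Z` with first `j-1` rows removed in terms of the
singular values `λᵢ^{(j)}` and right singular vectors `vᵢ^{(j)}` of `Z` with first `j` rows
removed; in particular the formula for its absolute value. -/
theorem schur_complement_diagonal_resolvent (N j : ℕ) (hj1 : 1 ≤ j) (hjN : j ≤ N)
    (Z : Matrix (Fin N) (Fin N) ℂ) (η : ℝ) (hη : 0 < η)
    (lam : Fin N → ℝ) (v : Fin N → Fin N → ℂ)
    (hmono : Monotone lam) (hnn : ∀ i, 0 ≤ lam i)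
    (hzero : ∀ i : Fin N, (i : ℕ) < j → lam i = 0)
    (heig : ∀ i, (Zᴴ * (Jmat N j)ᴴ * (Jmat N j * Z)).mulVec (v i)
      = (((lam i) ^ 2 : ℝ) : ℂ) • v i)
    (hnorm : ∀ i : Fin N, (∑ a, Complex.normSq (v i a))
      = if (i : ℕ) < j then 1 else 1 / 2)
    (horth : ∀ i i' : Fin N, i ≠ i' → (star (v i)) ⬝ᵥ (v i') = 0)
    (hcomp : ∑ i : Fin N, ((2 - if (i : ℕ) < j then 1 else 0 : ℂ)) •
        vecMulVec (v i) (star (v i)) = 1) :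
    ((HermJ N (j - 1) Z - (Complex.I * η) • 1)⁻¹
        (Sum.inl ⟨0, by omega⟩) (Sum.inl ⟨0, by omega⟩))⁻¹
      = -(Complex.I * η) - Complex.I * η *
          ((∑ i : Fin N, (2 - if (i : ℕ) < j then 1 else 0 : ℝ) *
            Complex.normSq ((Z.mulVec (v i)) ⟨j - 1, by omega⟩) /
              (lam i ^ 2 + η ^ 2) : ℝ) : ℂ) ∧
    ‖(HermJ N (j - 1) Z - (Complex.I * η) • 1)⁻¹
        (Sum.inl ⟨0, by omega⟩) (Sum.inl ⟨0, by omega⟩)‖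
      = (η + ∑ i : Fin N, ((2 - if (i : ℕ) < j then 1 else 0 : ℝ) * η /
            (lam i ^ 2 + η ^ 2)) *
          Complex.normSq ((Z.mulVec (v i)) ⟨j - 1, by omega⟩))⁻¹ := by
  classical
  have hmN : j - 1 < N := by omega
  have hη0 : (η : ℂ) ≠ 0 := Complex.ofReal_ne_zero.mpr (ne_of_gt hη)
  have hdpos : ∀ i : Fin N, (0:ℝ) < lam i ^ 2 + η ^ 2 := fun i => by positivity
  have hd0 : ∀ i : Fin N, ((lam i ^ 2 + η ^ 2 : ℝ) : ℂ) ≠ 0 :=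
    fun i => Complex.ofReal_ne_zero.mpr (ne_of_gt (hdpos i))
  set B : Matrix (Fin (N - (j-1))) (Fin N) ℂ := Jmat N (j-1) * Z with hBdef
  set B' : Matrix (Fin (N - j)) (Fin N) ℂ := Jmat N j * Z with hB'def
  set r : Fin N → ℂ := fun p => Z ⟨j - 1, hmN⟩ p with hrdef
  set T : Matrix (Fin N) (Fin N) ℂ :=
    ∑ i : Fin N, ((2 - if (i : ℕ) < j then 1 else 0 : ℂ)
        / ((lam i ^ 2 + η ^ 2 : ℝ) : ℂ)) • vecMulVec (v i) (star (v i)) with hTdef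
  set P : Matrix (Fin N) (Fin N) ℂ := B'ᴴ * B' + ((η : ℂ) ^ 2) • 1 with hPdef
  set bbM : Matrix (Fin N) (Fin N) ℂ := vecMulVec (star r) r with hbbdef
  set σ : ℂ := r ⬝ᵥ T.mulVec (star r) with hσdef
  set W : Matrix (Fin N) (Fin N) ℂ := T - (1 + σ)⁻¹ • (T * bbM * T) with hWdef
  set Sr : ℝ := ∑ i : Fin N, (2 - if (i : ℕ) < j then 1 else 0 : ℝ) *
      Complex.normSq ((Z.mulVec (v i)) ⟨j - 1, hmN⟩) / (lam i ^ 2 + η ^ 2) with hSrdef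
  -- eigen relations for P
  have hB'B' : Zᴴ * (Jmat N j)ᴴ * (Jmat N j * Z) = B'ᴴ * B' := by
    rw [hB'def, conjTranspose_mul]
  have heig' : ∀ i, P.mulVec (v i) = ((lam i ^ 2 + η ^ 2 : ℝ) : ℂ) • v i := by
    intro i
    rw [hPdef, add_mulVec, smul_mulVec, one_mulVec, ← hB'B', heig i, ← add_smul]
    congr 1
    push_cast
    ring
  have hPH : Pᴴ = P := by
    rw [hPdef, conjTranspose_add, conjTranspose_smul, conjTranspose_one, conjTranspose_mul,
      conjTranspose_conjTranspose]
    congr 1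
    rw [← Complex.ofReal_pow]
    simp [Complex.conj_ofReal]
  have hvMP : ∀ i, vecMul (star (v i)) P = ((lam i ^ 2 + η ^ 2 : ℝ) : ℂ) • star (v i) := by
    intro i
    have h1 : star (P.mulVec (v i)) = vecMul (star (v i)) Pᴴ := Matrix.star_mulVec _ _
    rw [hPH] at h1
    rw [← h1, heig' i, star_smul]
    congr 1
    simp [Complex.conj_ofReal]
  have hTP : T * P = 1 := by
    rw [hTdef, Finset.sum_mul, ← hcomp]
    refine Finset.sum_congr rfl fun i _ => ?_
    rw [smul_mul_assoc, vecMulVec_mul_mat, hvMP i, vecMulVec_smul_right, smul_smul,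
      div_mul_cancel₀ _ (hd0 i)]
  have hPT : P * T = 1 := by
    rw [hTdef, Finset.mul_sum, ← hcomp]
    refine Finset.sum_congr rfl fun i _ => ?_
    rw [mul_smul_comm, mat_mul_vecMulVec, heig' i, vecMulVec_smul_left, smul_smul,
      div_mul_cancel₀ _ (hd0 i)]
  -- decomposition of BᴴB
  have hsplit : Bᴴ * B = B'ᴴ * B' + bbM := by
    ext p q
    rw [hBdef, hB'def, Matrix.add_apply, JZJZ_entry, JZJZ_entry]
    rw [Finset.sum_eq_sum_Ico_succ_bot (show j - 1 < N from hmN)]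
    have hjj : j - 1 + 1 = j := by omega
    rw [hjj, dif_pos hmN, add_comm]
    congr 1
  -- bbM * T * bbM = σ • bbM
  have hbTb : bbM * T * bbM = σ • bbM := by
    rw [hbbdef, vecMulVec_mul_mat, vecMulVec_mul_mat, SchurAux.vecMul_vecMulVec, vecMulVec_smul_right]
    congr 1
    rw [hσdef, dotProduct_mulVec]
  -- σ = Sr
  have hσS : σ = (Sr : ℂ) := by
    rw [hσdef, hTdef, SchurAux.sum_mulVec, dot_sum, hSrdef]
    push_cast [apply_ite Complex.ofReal]
    refine Finset.sum_congr rfl fun i _ => ?_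
    rw [smul_mulVec, SchurAux.vecMulVec_mulVec, dotProduct_smul, smul_eq_mul, dotProduct_smul,
      smul_eq_mul]
    have hw : r ⬝ᵥ v i = (Z.mulVec (v i)) ⟨j - 1, hmN⟩ := rfl
    have hws : star (v i) ⬝ᵥ star r = (starRingEnd ℂ) ((Z.mulVec (v i)) ⟨j - 1, hmN⟩) := by
      rw [← hw]
      simp only [dotProduct, Pi.star_apply, Complex.star_def, map_sum]
      exact Finset.sum_congr rfl fun k _ => by rw [_root_.map_mul]; ring
    rw [hws, hw, ← Complex.normSq_eq_conj_mul_self]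
    ring
  have hS0 : (0:ℝ) ≤ Sr := by
    rw [hSrdef]
    refine Finset.sum_nonneg fun i _ => ?_
    have h1 := Complex.normSq_nonneg ((Z.mulVec (v i)) ⟨j - 1, hmN⟩)
    have hc : (0:ℝ) ≤ 2 - (if (i : ℕ) < j then 1 else 0) := by split_ifs <;> norm_num
    exact div_nonneg (mul_nonneg hc h1) (le_of_lt (hdpos i))
  have h1σ0 : (0:ℝ) < 1 + Sr := by linarith
  have h1σ : (1 : ℂ) + σ ≠ 0 := by
    rw [hσS, ← Complex.ofReal_one, ← Complex.ofReal_add]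
    exact Complex.ofReal_ne_zero.mpr (ne_of_gt h1σ0)
  have hscal : (1+σ)⁻¹ + (1+σ)⁻¹ * σ = 1 := by
    field_simp
  have hWP : W * (P + bbM) = 1 := by
    have e1 : T * bbM * T * P = T * bbM := by
      rw [mul_assoc (T * bbM) T P, hTP, mul_one]
    have e2 : T * bbM * T * bbM = σ • (T * bbM) := by
      rw [mul_assoc T bbM T, mul_assoc T (bbM * T) bbM, hbTb, mul_smul_comm]
    have e3 : T * bbM * T * (P + bbM) = (1 + σ) • (T * bbM) := by
      rw [mul_add (T * bbM * T) P bbM, e1, e2, add_smul, one_smul]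
    rw [hWdef, sub_mul, smul_mul_assoc, e3, smul_smul, inv_mul_cancel₀ h1σ, one_smul,
      mul_add T P bbM, hTP]
    exact add_sub_cancel_right _ (T * bbM)
  have hPW : (P + bbM) * W = 1 := by
    have e1 : P * (T * bbM * T) = bbM * T := by
      rw [← mul_assoc P (T * bbM) T, ← mul_assoc P T bbM, hPT, one_mul]
    have e2 : bbM * (T * bbM * T) = σ • (bbM * T) := by
      rw [← mul_assoc bbM (T * bbM) T, ← mul_assoc bbM T bbM, hbTb, smul_mul_assoc]
    have e3 : (P + bbM) * (T * bbM * T) = (1 + σ) • (bbM * T) := by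
      rw [add_mul P bbM (T * bbM * T), e1, e2, add_smul, one_smul]
    rw [hWdef, mul_sub, mul_smul_comm, e3, smul_smul, inv_mul_cancel₀ h1σ, one_smul,
      add_mul P bbM T, hPT]
    exact add_sub_cancel_right _ (bbM * T)
  have hQ : Bᴴ * B + ((η:ℂ)^2) • 1 = P + bbM := by
    rw [hsplit, hPdef]
    abel
  have hQW : (Bᴴ * B + ((η:ℂ)^2) • 1) * W = 1 := by rw [hQ]; exact hPW
  have hWQ : W * (Bᴴ * B + ((η:ℂ)^2) • 1) = 1 := by rw [hQ]; exact hWP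
  have f1 : Bᴴ * B * W = 1 - ((η:ℂ)^2) • W := by
    have h := hQW
    rw [add_mul, smul_mul_assoc, one_mul] at h
    exact eq_sub_of_add_eq h
  -- scalars
  set s0 : ℂ := Complex.I * (η:ℂ) with hs0def
  have hs0I : -s0 * (Complex.I / (η:ℂ)) = 1 := by
    have h : -s0 * (Complex.I / (η:ℂ))
        = -(Complex.I * Complex.I) * ((η:ℂ) / (η:ℂ)) := by rw [hs0def]; ring
    rw [h, Complex.I_mul_I, div_self hη0]
    norm_num
  have hs0b : (Complex.I / (η:ℂ)) * ((η:ℂ)^2) = s0 := by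
    have h : (Complex.I / (η:ℂ)) * ((η:ℂ)^2)
        = Complex.I * (η:ℂ) * ((η:ℂ) / (η:ℂ)) := by ring
    rw [h, div_self hη0, mul_one, hs0def]
  have hs0c : -s0 * s0 = ((η:ℂ))^2 := by
    have h : -s0 * s0 = -(Complex.I * Complex.I) * ((η:ℂ) * (η:ℂ)) := by rw [hs0def]; ring
    rw [h, Complex.I_mul_I]
    ring
  -- the block matrices
  set AM : Matrix (Fin (N-(j-1)) ⊕ Fin N) (Fin (N-(j-1)) ⊕ Fin N) ℂ :=
    fromBlocks ((-s0) • 1) B Bᴴ ((-s0) • 1) with hAMdef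
  set MM : Matrix (Fin (N-(j-1)) ⊕ Fin N) (Fin (N-(j-1)) ⊕ Fin N) ℂ :=
    fromBlocks ((Complex.I / (η:ℂ)) • (1 - B * W * Bᴴ)) (B * W) (W * Bᴴ) (s0 • W) with hMMdef
  have hA : HermJ N (j-1) Z - s0 • 1 = AM := by
    show fromBlocks 0 B Bᴴ 0 - s0 • 1 = AM
    rw [hAMdef, sub_eq_add_neg, ← fromBlocks_one, fromBlocks_smul, fromBlocks_neg,
      fromBlocks_add, fromBlocks_inj]
    refine ⟨by simp [neg_smul], by simp, by simp, by simp [neg_smul]⟩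
  have hTL : (-s0) • (1 : Matrix (Fin (N-(j-1))) (Fin (N-(j-1))) ℂ)
      * ((Complex.I / (η:ℂ)) • (1 - B * W * Bᴴ)) + B * (W * Bᴴ) = 1 := by
    rw [Matrix.smul_mul, Matrix.one_mul, smul_smul, hs0I, one_smul, ← Matrix.mul_assoc]
    abel
  have hTR : (-s0) • (1 : Matrix (Fin (N-(j-1))) (Fin (N-(j-1))) ℂ) * (B * W)
      + B * (s0 • W) = 0 := by
    rw [Matrix.smul_mul, Matrix.one_mul, Matrix.mul_smul, neg_smul]
    abel
  have hBL : Bᴴ * ((Complex.I / (η:ℂ)) • (1 - B * W * Bᴴ))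
      + (-s0) • (1 : Matrix (Fin N) (Fin N) ℂ) * (W * Bᴴ) = 0 := by
    rw [Matrix.mul_smul, Matrix.mul_sub, Matrix.mul_one, Matrix.smul_mul, Matrix.one_mul,
      ← Matrix.mul_assoc Bᴴ (B*W) Bᴴ, ← Matrix.mul_assoc Bᴴ B W, f1, Matrix.sub_mul,
      Matrix.one_mul, Matrix.smul_mul, sub_sub_cancel, smul_smul, hs0b, neg_smul]
    abel
  have hBR : Bᴴ * (B * W) + (-s0) • (1 : Matrix (Fin N) (Fin N) ℂ) * (s0 • W) = 1 := by
    rw [← Matrix.mul_assoc Bᴴ B W, f1, Matrix.smul_mul, Matrix.one_mul, smul_smul, hs0c]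
    abel
  have hAMMM : AM * MM = 1 := by
    rw [hAMdef, hMMdef, fromBlocks_multiply, hTL, hTR, hBL, hBR, fromBlocks_one]
  have hinv : (HermJ N (j-1) Z - s0 • 1)⁻¹ = MM := by
    rw [hA]
    exact inv_eq_right_inv hAMMM
  -- entry computations
  have hgen : ∀ (a : Fin (N - (j-1))), (a:ℕ) = 0 → ∀ X : Matrix (Fin N) (Fin N) ℂ,
      (B * X * Bᴴ) a a = r ⬝ᵥ X.mulVec (star r) := by
    intro a ha X
    have hB0 : ∀ p, B a p = r p := by
      intro p
      rw [hBdef, Jmat_mul_apply Z a p (by omega)]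
      have he : (⟨(a:ℕ) + (j-1), by omega⟩ : Fin N) = ⟨j-1, hmN⟩ := Fin.ext (by simp [ha])
      rw [he]
    rw [Matrix.mul_apply]
    simp only [Matrix.conjTranspose_apply, Matrix.mul_apply, hB0, Matrix.mulVec,
      dotProduct, Pi.star_apply, Finset.sum_mul, Finset.mul_sum]
    rw [Finset.sum_comm]
    exact Finset.sum_congr rfl fun p _ => Finset.sum_congr rfl fun q _ => by ring
  have hφ2 : r ⬝ᵥ (T * bbM * T).mulVec (star r) = σ * σ := by
    rw [← Matrix.mulVec_mulVec, ← Matrix.mulVec_mulVec, hbbdef, SchurAux.vecMulVec_mulVec,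
      mulVec_smul, dotProduct_smul, smul_eq_mul, ← hσdef]
  have hBWB : ∀ a : Fin (N - (j-1)), (a:ℕ) = 0 →
      (B * W * Bᴴ) a a = σ - (1+σ)⁻¹ * (σ * σ) := by
    intro a ha
    rw [hgen a ha W, hWdef, sub_mulVec, smul_mulVec, dotProduct_sub, dotProduct_smul,
      smul_eq_mul, hφ2, ← hσdef]
  have hval : ∀ a : Fin (N - (j-1)), (a:ℕ) = 0 →
      MM (Sum.inl a) (Sum.inl a) = Complex.I / ((η:ℂ) * (1 + σ)) := by
    intro a ha
    rw [hMMdef, fromBlocks_apply₁₁, Matrix.smul_apply, Matrix.sub_apply, Matrix.one_apply_eq,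
      hBWB a ha, smul_eq_mul]
    field_simp
    ring
  have hfinal1 : (Complex.I / ((η:ℂ) * (1+σ)))⁻¹ = -s0 - s0 * (Sr:ℂ) := by
    rw [hσS, hs0def, inv_div, Complex.div_I]
    push_cast
    ring
  have habs : ‖Complex.I / ((η:ℂ) * (1+σ))‖ = (η * (1+Sr))⁻¹ := by
    rw [hσS, norm_div, Complex.norm_I]
    have hc : ((η:ℂ) * (1 + (Sr:ℂ))) = ((η * (1+Sr) : ℝ) : ℂ) := by push_cast; ring
    rw [hc, Complex.norm_real, Real.norm_eq_abs, abs_of_pos (by nlinarith : (0:ℝ) < η * (1+Sr)), one_div]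
  constructor
  · rw [hinv]
    exact (congrArg Inv.inv (hval ⟨0, by omega⟩ rfl)).trans hfinal1
  · rw [hinv]
    refine ((congrArg norm (hval ⟨0, by omega⟩ rfl)).trans habs).trans ?_
    congr 1
    rw [hSrdef, mul_add, mul_one, Finset.mul_sum]
    congr 1
    refine Finset.sum_congr rfl fun i _ => ?_
    ring
end

section
/- Let A ∈ C^{N×N} have simple spectrum, with σ_i, l_i, r_i, O_ii as above. Then for each i, the eigenvalue condition number satisfies √(O_ii) = lim_{z→σ_i} |σ_i − z| / λ_1(A − z), where λ_1(A − z) is the smallest singular value of A − z. -/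
open Matrix

/-- Smallest singular value of a complex square matrix. -/
noncomputable def sminC {n : Type*} [Fintype n] (M : Matrix n n ℂ) : ℝ :=
  sInf {c | ∃ v : n → ℂ, cnorm v = 1 ∧ c = cnorm (M.mulVec v)}

lemma cnorm_eq {n : Type*} [Fintype n] (v : n → ℂ) :
    cnorm v = ‖(WithLp.equiv 2 (n → ℂ)).symm v‖ := by
  rw [EuclideanSpace.norm_eq, cnorm]
  congr 1
  refine Finset.sum_congr rfl fun a _ => ?_
  simp [Complex.normSq_eq_norm_sq]

lemma sminC_eq_inv_norm {n : Type*} [Fintype n] [DecidableEq n] [Nonempty n]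
    (M : Matrix n n ℂ) (S : EuclideanSpace ℂ n →L[ℂ] EuclideanSpace ℂ n)
    (hTS : (toEuclideanCLM (𝕜 := ℂ) M) * S = 1) (hST : S * (toEuclideanCLM (𝕜 := ℂ) M) = 1) :
    sminC M = ‖S‖⁻¹ := by
  set T := toEuclideanCLM (𝕜 := ℂ) M with hT
  have hset : {c | ∃ v : n → ℂ, cnorm v = 1 ∧ c = cnorm (M.mulVec v)}
      = {c | ∃ x : EuclideanSpace ℂ n, ‖x‖ = 1 ∧ c = ‖T x‖} := by
    ext c
    constructor
    · rintro ⟨v, hv1, rfl⟩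
      refine ⟨(WithLp.equiv 2 _).symm v, by rwa [← cnorm_eq], ?_⟩
      rw [cnorm_eq, hT]; rfl
    · rintro ⟨x, hx1, rfl⟩
      refine ⟨WithLp.equiv 2 _ x, ?_, ?_⟩
      · rw [cnorm_eq]; simpa using hx1
      · rw [cnorm_eq]
        have hmv : M.mulVec (WithLp.equiv 2 _ x) = WithLp.equiv 2 _ (T x) := by
          rw [hT]; rfl
        rw [hmv]
        simp
  have hS0 : (0 : ℝ) < ‖S‖ := by
    rcases eq_or_lt_of_le (norm_nonneg S) with h | h
    · exfalso
      have : S = 0 := by simpa using (norm_eq_zero.mp h.symm)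
      rw [this, mul_zero] at hTS
      exact one_ne_zero hTS.symm
    · exact h
  have hTSx : ∀ x, T (S x) = x := fun x => by
    have := ContinuousLinearMap.ext_iff.1 hTS x
    simpa [ContinuousLinearMap.mul_apply] using this
  have hSTx : ∀ x, S (T x) = x := fun x => by
    have := ContinuousLinearMap.ext_iff.1 hST x
    simpa [ContinuousLinearMap.mul_apply] using this
  have hlb : ∀ c ∈ {c | ∃ x : EuclideanSpace ℂ n, ‖x‖ = 1 ∧ c = ‖T x‖}, ‖S‖⁻¹ ≤ c := by
    rintro c ⟨x, hx1, rfl⟩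
    have h1 : (1 : ℝ) = ‖S (T x)‖ := by rw [hSTx x, hx1]
    have h2 : ‖S (T x)‖ ≤ ‖S‖ * ‖T x‖ := S.le_opNorm _
    rw [inv_le_iff_one_le_mul₀ hS0]
    linarith
  obtain ⟨w, hw_mem, hw_max⟩ := (isCompact_sphere (0 : EuclideanSpace ℂ n) 1).exists_isMaxOn
    (NormedSpace.sphere_nonempty.mpr zero_le_one)
    (continuous_norm.comp S.continuous).continuousOn
  have hw1 : ‖w‖ = 1 := mem_sphere_zero_iff_norm.mp hw_mem
  have hmax : ∀ x : EuclideanSpace ℂ n, ‖x‖ = 1 → ‖S x‖ ≤ ‖S w‖ := fun x hx =>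
    hw_max (mem_sphere_zero_iff_norm.mpr hx)
  have hSw : ‖S w‖ = ‖S‖ := by
    refine le_antisymm (by simpa [hw1] using S.le_opNorm w) ?_
    refine S.opNorm_le_bound (norm_nonneg _) fun x => ?_
    rcases eq_or_ne x 0 with rfl | hx
    · simp
    · have hxn : ‖x‖ ≠ 0 := norm_ne_zero_iff.mpr hx
      have := hmax ((‖x‖ : ℂ)⁻¹ • x) (by
        rw [norm_smul]
        simp [norm_inv, hxn, inv_mul_cancel₀ hxn])
      rw [S.map_smul, norm_smul] at this
      simp only [norm_inv, Complex.norm_real, Real.norm_eq_abs, abs_norm] at this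
      rw [inv_mul_le_iff₀ (lt_of_le_of_ne (norm_nonneg x) (Ne.symm hxn))] at this
      linarith [this]
  have hSw0 : (0 : ℝ) < ‖S w‖ := hSw ▸ hS0
  have hmem : ‖S‖⁻¹ ∈ {c | ∃ x : EuclideanSpace ℂ n, ‖x‖ = 1 ∧ c = ‖T x‖} := by
    refine ⟨((‖S w‖ : ℂ))⁻¹ • S w, ?_, ?_⟩
    · rw [norm_smul]
      simp [norm_inv, inv_mul_cancel₀ (ne_of_gt hSw0)]
    · rw [T.map_smul, hTSx, norm_smul, hw1]
      simp [norm_inv, hSw]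
  rw [sminC, hset]
  exact le_antisymm (csInf_le ⟨‖S‖⁻¹, hlb⟩ hmem) (le_csInf ⟨_, hmem⟩ hlb)

/-- rank one operator `x ↦ ⟪u, x⟫ • v` on Euclidean space. -/
noncomputable def rankOne' {n : Type*} [Fintype n] (u v : n → ℂ) :
    EuclideanSpace ℂ n →L[ℂ] EuclideanSpace ℂ n :=
  (innerSL ℂ ((WithLp.equiv 2 (n → ℂ)).symm u)).smulRight ((WithLp.equiv 2 (n → ℂ)).symm v)

lemma rankOne'_apply {n : Type*} [Fintype n] (u v x : n → ℂ) :
    rankOne' u v ((WithLp.equiv 2 (n → ℂ)).symm x) =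
      (star u ⬝ᵥ x) • (WithLp.equiv 2 (n → ℂ)).symm v := by
  rw [rankOne', ContinuousLinearMap.smulRight_apply, innerSL_apply_apply,
    WithLp.equiv_symm_apply, EuclideanSpace.inner_toLp_toLp, dotProduct_comm]

lemma norm_rankOne' {n : Type*} [Fintype n] (u v : n → ℂ) :
    ‖rankOne' u v‖ = cnorm u * cnorm v := by
  rw [rankOne', ContinuousLinearMap.norm_smulRight_apply, innerSL_apply_norm,
    cnorm_eq, cnorm_eq]


set_option maxHeartbeats 2000000 in
set_option synthInstance.maxHeartbeats 500000 in
/-- For a matrix with simple spectrum, the eigenvalue condition number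
satisfies `√(O_ii) = lim_{z → σᵢ} |σᵢ - z| / λ₁(A - z)`. -/
theorem condition_number_as_limit (N : ℕ) (A : Matrix (Fin N) (Fin N) ℂ)
    (σ : Fin N → ℂ) (r l : Fin N → (Fin N → ℂ))
    (hσ : Function.Injective σ)
    (hr : ∀ i, A.mulVec (r i) = σ i • r i)
    (hl : ∀ i, Aᴴ.mulVec (l i) = (starRingEnd ℂ) (σ i) • l i)
    (hbi : ∀ i j, (star (l i)) ⬝ᵥ (r j) = if i = j then (1 : ℂ) else 0)
    (i : Fin N) :
    Filter.Tendsto (fun z : ℂ => ‖σ i - z‖ / sminC (A - z • 1))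
      (nhdsWithin (σ i) {σ i}ᶜ)
      (nhds (Real.sqrt ((∑ a, Complex.normSq (l i a)) * (∑ a, Complex.normSq (r i a))))) := by
  haveI : Nonempty (Fin N) := ⟨i⟩
  set e := WithLp.equiv 2 (Fin N → ℂ) with he
  set K : Fin N → (EuclideanSpace ℂ (Fin N) →L[ℂ] EuclideanSpace ℂ (Fin N)) :=
    fun j => rankOne' (l j) (r j) with hK
  set rE : Fin N → EuclideanSpace ℂ (Fin N) := fun j => e.symm (r j) with hrE
  -- basic action facts
  have hTmv : ∀ (M : Matrix (Fin N) (Fin N) ℂ) (x : Fin N → ℂ),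
      toEuclideanCLM (𝕜 := ℂ) M (e.symm x) = e.symm (M.mulVec x) := fun M x => by
    rw [he]; rfl
  have hKapp : ∀ j (x : Fin N → ℂ), K j (e.symm x) = (star (l j) ⬝ᵥ x) • e.symm (r j) :=
    fun j x => rankOne'_apply (l j) (r j) x
  have hKr : ∀ j k, K j (rE k) = if j = k then rE k else 0 := by
    intro j k
    rw [hrE]
    simp only [hKapp j (r k), hbi j k]
    split_ifs with h
    · subst h; rw [one_smul]
    · rw [zero_smul]
  -- the rE form a basis
  have hli : LinearIndependent ℂ rE := by
    rw [Fintype.linearIndependent_iff]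
    intro g hg j
    have h2 := congrArg (K j) hg
    rw [map_sum, map_zero] at h2
    simp only [ContinuousLinearMap.map_smul] at h2
    rw [Finset.sum_congr rfl (fun k _ => by rw [hKr j k])] at h2
    classical
    rw [Finset.sum_congr rfl (fun k _ => by
        by_cases h : j = k <;> simp [h] :
        ∀ k ∈ Finset.univ, g k • (if j = k then rE k else 0) = if j = k then g k • rE k else 0),
      Finset.sum_ite_eq Finset.univ j (fun k => g k • rE k)] at h2
    simp only [Finset.mem_univ, if_true] at h2
    have hrj : rE j ≠ 0 := by
      intro h0
      have := hKr j j
      rw [h0] at this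
      simp only [map_zero, if_pos rfl] at this
      -- this : 0 = rE j = 0 contradiction with star l j ⬝ᵥ r j = 1?
      have h1 := hbi j j
      rw [if_pos rfl] at h1
      have : r j = 0 := by
        have := congrArg e h0
        exact this
      rw [this] at h1
      simp [dotProduct] at h1
    rcases smul_eq_zero.mp h2 with h | h
    · exact h
    · exact absurd h hrj
  have hcard : Fintype.card (Fin N) = Module.finrank ℂ (EuclideanSpace ℂ (Fin N)) := by
    simp [finrank_euclideanSpace_fin]
  set b := basisOfLinearIndependentOfCardEqFinrank hli hcard with hb
  have hbr : ∀ k, b k = rE k := fun k => by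
    rw [hb, coe_basisOfLinearIndependentOfCardEqFinrank]
  -- completeness: sum of K j is the identity
  have hsum : (∑ j, K j) = (1 : EuclideanSpace ℂ (Fin N) →L[ℂ] EuclideanSpace ℂ (Fin N)) := by
    apply ContinuousLinearMap.coe_injective
    refine Module.Basis.ext b fun k => ?_
    rw [hbr k]
    have happ : ((∑ j, K j : EuclideanSpace ℂ (Fin N) →L[ℂ] EuclideanSpace ℂ (Fin N)) :
        EuclideanSpace ℂ (Fin N) →ₗ[ℂ] EuclideanSpace ℂ (Fin N)) (rE k) = ∑ j, K j (rE k) := by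
      simp
    rw [happ, Finset.sum_congr rfl (fun j _ => hKr j k),
      Finset.sum_ite_eq' Finset.univ k (fun j => rE k)]
    simp
  -- action of A - z•1 on eigenvectors
  have hTA : ∀ (z : ℂ) j, toEuclideanCLM (𝕜 := ℂ) (A - z • 1) (rE j) = (σ j - z) • rE j := by
    intro z j
    rw [hrE]
    simp only []
    rw [hTmv]
    have hmv : (A - z • 1).mulVec (r j) = (σ j - z) • r j := by
      rw [sub_mulVec, smul_mulVec, one_mulVec, hr j, sub_smul]
    rw [hmv, he]; rfl
  have hTK : ∀ (z : ℂ) j,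
      (toEuclideanCLM (𝕜 := ℂ) (A - z • 1)).comp (K j) = (σ j - z) • K j := by
    intro z j
    refine ContinuousLinearMap.ext fun x => ?_
    rw [ContinuousLinearMap.comp_apply, ContinuousLinearMap.smul_apply]
    have hKx : K j x = (inner ℂ ((WithLp.equiv 2 (Fin N → ℂ)).symm (l j)) x : ℂ) • rE j := by
      rw [hK]
      simp only []
      rw [rankOne', ContinuousLinearMap.smulRight_apply, innerSL_apply_apply]
    rw [hKx, ContinuousLinearMap.map_smul, hTA z j, smul_comm]
  have hKT : ∀ (z : ℂ) j,
      (K j).comp (toEuclideanCLM (𝕜 := ℂ) (A - z • 1)) = (σ j - z) • K j := by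
    intro z j
    refine ContinuousLinearMap.ext fun x => ?_
    rw [ContinuousLinearMap.comp_apply, ContinuousLinearMap.smul_apply]
    have hKgen : ∀ y : EuclideanSpace ℂ (Fin N),
        K j y = (inner ℂ ((WithLp.equiv 2 (Fin N → ℂ)).symm (l j)) y : ℂ) • rE j := by
      intro y
      rw [hK]
      simp only []
      rw [rankOne', ContinuousLinearMap.smulRight_apply, innerSL_apply_apply]
    rw [hKgen, hKgen]
    have hadj : (inner ℂ ((WithLp.equiv 2 (Fin N → ℂ)).symm (l j))
        (toEuclideanCLM (𝕜 := ℂ) (A - z • 1) x) : ℂ) =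
        inner ℂ (toEuclideanCLM (𝕜 := ℂ) ((A - z • 1)ᴴ) ((WithLp.equiv 2 (Fin N → ℂ)).symm (l j))) x := by
      have h : toEuclideanCLM (𝕜 := ℂ) ((A - z • 1)ᴴ) =
          star (toEuclideanCLM (𝕜 := ℂ) (A - z • 1)) := by
        rw [← map_star]; rfl
      rw [h, ContinuousLinearMap.star_eq_adjoint, ContinuousLinearMap.adjoint_inner_left]
    have hTH : toEuclideanCLM (𝕜 := ℂ) ((A - z • 1)ᴴ) ((WithLp.equiv 2 (Fin N → ℂ)).symm (l j)) =
        (starRingEnd ℂ) (σ j - z) • (WithLp.equiv 2 (Fin N → ℂ)).symm (l j) := by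
      have := hTmv ((A - z • 1)ᴴ) (l j)
      rw [he] at this
      rw [this]
      have hmv : ((A - z • 1)ᴴ).mulVec (l j) = (starRingEnd ℂ) (σ j - z) • l j := by
        rw [conjTranspose_sub, Matrix.conjTranspose_smul, conjTranspose_one, sub_mulVec,
          smul_mulVec, one_mulVec, hl j, map_sub, sub_smul]
        rfl
      rw [hmv]; rfl
    rw [hadj, hTH, inner_smul_left]
    simp only [Complex.conj_conj, smul_smul]
  -- the resolvent
  set S : ℂ → (EuclideanSpace ℂ (Fin N) →L[ℂ] EuclideanSpace ℂ (Fin N)) :=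
    fun z => ∑ j, (σ j - z)⁻¹ • K j with hS
  have hinv : ∀ z : ℂ, (∀ j, z ≠ σ j) →
      toEuclideanCLM (𝕜 := ℂ) (A - z • 1) * S z = 1 ∧
      S z * toEuclideanCLM (𝕜 := ℂ) (A - z • 1) = 1 := by
    intro z hz
    have hne : ∀ j, σ j - z ≠ 0 := fun j => sub_ne_zero.mpr (Ne.symm (hz j))
    constructor
    · rw [hS]
      simp only []
      rw [Finset.mul_sum, ← hsum]
      refine Finset.sum_congr rfl fun j _ => ?_
      rw [mul_smul_comm, ContinuousLinearMap.mul_def, hTK z j, smul_smul,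
        inv_mul_cancel₀ (hne j), one_smul]
    · rw [hS]
      simp only []
      rw [Finset.sum_mul, ← hsum]
      refine Finset.sum_congr rfl fun j _ => ?_
      rw [smul_mul_assoc, ContinuousLinearMap.mul_def, hKT z j, smul_smul,
        inv_mul_cancel₀ (hne j), one_smul]
  classical
  set G : ℂ → (EuclideanSpace ℂ (Fin N) →L[ℂ] EuclideanSpace ℂ (Fin N)) :=
    fun z => K i + ∑ j ∈ Finset.univ.erase i, ((σ i - z) * (σ j - z)⁻¹) • K j with hG
  have hGz : ∀ z : ℂ, (∀ j, z ≠ σ j) → (σ i - z) • S z = G z := by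
    intro z hz
    rw [hS, hG]
    simp only []
    rw [Finset.smul_sum]
    rw [Finset.sum_congr rfl (fun j _ => (smul_smul (σ i - z) ((σ j - z)⁻¹) (K j)))]
    rw [← Finset.add_sum_erase _ _ (Finset.mem_univ i)]
    congr 1
    rw [mul_inv_cancel₀ (sub_ne_zero.mpr (Ne.symm (hz i))), one_smul]
  have heq : ∀ z : ℂ, (∀ j, z ≠ σ j) →
      ‖σ i - z‖ / sminC (A - z • 1) = ‖G z‖ := by
    intro z hz
    obtain ⟨h1, h2⟩ := hinv z hz
    rw [sminC_eq_inv_norm (A - z • 1) (S z) h1 h2, div_eq_mul_inv, inv_inv,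
      ← norm_smul, hGz z hz]
  have hEv : ∀ᶠ z in nhdsWithin (σ i) {σ i}ᶜ, ∀ j, z ≠ σ j := by
    rw [Filter.eventually_all]
    intro j
    rcases eq_or_ne j i with rfl | hj
    · exact Filter.Eventually.mono self_mem_nhdsWithin fun z hz => hz
    · exact Filter.Eventually.filter_mono nhdsWithin_le_nhds
        (eventually_ne_nhds (fun h => hj (hσ h).symm))
  have hGlim : Filter.Tendsto G (nhds (σ i)) (nhds (K i)) := by
    have hsumlim : Filter.Tendsto
        (fun z : ℂ => ∑ j ∈ Finset.univ.erase i, ((σ i - z) * (σ j - z)⁻¹) • K j)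
        (nhds (σ i)) (nhds 0) := by
      have hterm : ∀ j ∈ Finset.univ.erase i, Filter.Tendsto
          (fun z : ℂ => ((σ i - z) * (σ j - z)⁻¹) • K j) (nhds (σ i)) (nhds 0) := by
        intro j hj
        have hji : j ≠ i := (Finset.mem_erase.mp hj).1
        have hne : σ j - σ i ≠ 0 := sub_ne_zero.mpr fun h => hji (hσ h)
        have h1 : Filter.Tendsto (fun z : ℂ => σ i - z) (nhds (σ i)) (nhds 0) := by
          have := tendsto_const_nhds (x := σ i) (f := nhds (σ i)) |>.sub
            (Filter.tendsto_id (x := nhds (σ i)))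
          simpa using this
        have h2 : Filter.Tendsto (fun z : ℂ => (σ j - z)⁻¹) (nhds (σ i))
            (nhds ((σ j - σ i)⁻¹)) :=
          (tendsto_const_nhds.sub Filter.tendsto_id).inv₀ hne
        have h0 := (h1.mul h2).smul_const (K j)
        simp only [zero_mul] at h0
        rw [show (0 : ℂ) • K j = 0 from zero_smul ℂ (K j)] at h0
        exact h0
      have := tendsto_finset_sum (Finset.univ.erase i) hterm
      simpa using this
    have := (tendsto_const_nhds (x := K i) (f := nhds (σ i))).add hsumlim
    rw [hG]
    simpa using this
  have hnorm : Filter.Tendsto (fun z => ‖G z‖) (nhds (σ i)) (nhds ‖K i‖) := hGlim.norm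
  have hKin : ‖K i‖ = Real.sqrt ((∑ a, Complex.normSq (l i a)) * (∑ a, Complex.normSq (r i a))) := by
    rw [hK]
    simp only []
    rw [norm_rankOne', cnorm, cnorm, ← Real.sqrt_mul (Finset.sum_nonneg fun a _ => Complex.normSq_nonneg _)]
  rw [← hKin]
  exact Filter.Tendsto.congr' (hEv.mono fun z hz => (heq z hz).symm)
    (hnorm.mono_left nhdsWithin_le_nhds)
end

section
/- Let D' = diag(m_1, m_2) with m_1, m_2 > 0, let c_0 ∈ (0, 1/2), and let ν be a probability measure on R^2 with density bounded by M. Then ∫_{R^2} (c_0 + ‖D' x‖^2)^{−1} dν(x) ≤ 1 + C · (M / (m_1 m_2)) · |log c_0| for a universal constant C. -/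
open MeasureTheory Set
open scoped ENNReal

/-- For `D' = diag(m₁,m₂)` with `m₁,m₂ > 0`, `c₀ ∈ (0,1/2)`, and a
probability measure `ν` on `ℝ²` with density bounded by `M`,
`∫ (c₀ + ‖D'x‖²)⁻¹ dν ≤ 1 + C (M/(m₁m₂)) |log c₀|` for a universal constant `C`. -/
theorem diagonal_weighted_inverse_moment :
    ∃ C : ℝ, 0 < C ∧
      ∀ m₁ m₂ : ℝ, 0 < m₁ → 0 < m₂ →
      ∀ c₀ : ℝ, 0 < c₀ → c₀ < 1 / 2 →
      ∀ M : ℝ, 0 ≤ M →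
      ∀ ν : Measure (ℝ × ℝ), IsProbabilityMeasure ν →
      (∀ s : Set (ℝ × ℝ), MeasurableSet s → ν s ≤ ENNReal.ofReal M * volume s) →
      ∫ p, (c₀ + ((m₁ * p.1) ^ 2 + (m₂ * p.2) ^ 2))⁻¹ ∂ν
        ≤ 1 + C * (M / (m₁ * m₂)) * |Real.log c₀| := by
  refine ⟨4, by norm_num, ?_⟩
  intro m₁ m₂ hm₁ hm₂ c₀ hc₀ hc₀' M hM ν hν hνM
  set c : ℝ := 4 * M / (m₁ * m₂) with hc
  have hc0 : 0 ≤ c := by positivity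
  have hden : ∀ p : ℝ × ℝ, 0 < c₀ + ((m₁ * p.1) ^ 2 + (m₂ * p.2) ^ 2) := fun p => by positivity
  set f : ℝ × ℝ → ℝ := fun p => (c₀ + ((m₁ * p.1) ^ 2 + (m₂ * p.2) ^ 2))⁻¹ with hfdef
  have hfpos : ∀ p, 0 < f p := fun p => inv_pos.2 (hden p)
  have hfle : ∀ p, f p ≤ c₀⁻¹ := by
    intro p
    have h' : c₀ ≤ c₀ + ((m₁ * p.1) ^ 2 + (m₂ * p.2) ^ 2) := by
      nlinarith [sq_nonneg (m₁ * p.1), sq_nonneg (m₂ * p.2)]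
    exact inv_anti₀ hc₀ h'
  have hfc : Continuous f := by
    apply Continuous.inv₀
    · fun_prop
    · exact fun p => (hden p).ne'
  have h1 : ∫ p, f p ∂ν = (∫⁻ p, ENNReal.ofReal (f p) ∂ν).toReal :=
    integral_eq_lintegral_of_nonneg_ae (ae_of_all _ fun p => (hfpos p).le)
      hfc.aestronglyMeasurable
  have h2 : ∫⁻ p, ENNReal.ofReal (f p) ∂ν = ∫⁻ t in Ioi (0:ℝ), ν {a | t < f a} :=
    lintegral_eq_lintegral_meas_lt ν (ae_of_all _ fun p => (hfpos p).le) hfc.aemeasurable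
  -- pointwise bound on the layer-cake integrand
  have hbound : ∀ t ∈ Ioi (0:ℝ), ν {a | t < f a} ≤
      (Ioc (0:ℝ) 1).indicator (fun _ => (1:ℝ≥0∞)) t
        + (Ioo (1:ℝ) c₀⁻¹).indicator (fun t => ENNReal.ofReal (c / t)) t := by
    intro t ht
    have hts : (0:ℝ) < t := ht
    rcases le_or_gt t 1 with h | h
    · have hind1 : (Ioc (0:ℝ) 1).indicator (fun _ => (1:ℝ≥0∞)) t = 1 :=
        indicator_of_mem (show t ∈ Ioc (0:ℝ) 1 from ⟨hts, h⟩) _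
      rw [hind1]
      exact le_trans prob_le_one le_self_add
    · rcases lt_or_ge t c₀⁻¹ with h' | h'
      · set A : ℝ := Real.sqrt t⁻¹ / m₁ with hA
        set B : ℝ := Real.sqrt t⁻¹ / m₂ with hB
        have hsub : {a : ℝ × ℝ | t < f a} ⊆ Ioo (-A) A ×ˢ Ioo (-B) B := by
          intro p hp
          simp only [mem_setOf_eq] at hp
          have hq : (m₁ * p.1) ^ 2 + (m₂ * p.2) ^ 2 < t⁻¹ := by
            have e1 : t * t⁻¹ = 1 := mul_inv_cancel₀ hts.ne'
            have e2 : (c₀ + ((m₁ * p.1) ^ 2 + (m₂ * p.2) ^ 2)) * f p = 1 :=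
              mul_inv_cancel₀ (hden p).ne'
            nlinarith [hden p, mul_lt_mul_of_pos_left hp (hden p), hfpos p,
              mul_pos hts hc₀]
          have hx : |p.1| < A := by
            have h1x : (m₁ * p.1) ^ 2 < t⁻¹ := by nlinarith [sq_nonneg (m₂ * p.2)]
            have habs : |m₁ * p.1| < Real.sqrt t⁻¹ := by
              rw [← Real.sqrt_sq_eq_abs]
              exact Real.sqrt_lt_sqrt (sq_nonneg _) h1x
            rw [abs_mul, abs_of_pos hm₁] at habs
            rw [hA]
            exact (lt_div_iff₀' hm₁).2 habs
          have hy : |p.2| < B := by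
            have h1y : (m₂ * p.2) ^ 2 < t⁻¹ := by nlinarith [sq_nonneg (m₁ * p.1)]
            have habs : |m₂ * p.2| < Real.sqrt t⁻¹ := by
              rw [← Real.sqrt_sq_eq_abs]
              exact Real.sqrt_lt_sqrt (sq_nonneg _) h1y
            rw [abs_mul, abs_of_pos hm₂] at habs
            rw [hB]
            exact (lt_div_iff₀' hm₂).2 habs
          exact ⟨abs_lt.1 hx, abs_lt.1 hy⟩
        have hvol : volume (Ioo (-A) A ×ˢ Ioo (-B) B)
            = ENNReal.ofReal (4 / (m₁ * m₂) * t⁻¹) := by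
          rw [Measure.volume_eq_prod, Measure.prod_prod, Real.volume_Ioo, Real.volume_Ioo,
            ← ENNReal.ofReal_mul (by rw [sub_neg_eq_add]; positivity)]
          congr 1
          have hs : Real.sqrt t⁻¹ ^ 2 = t⁻¹ := Real.sq_sqrt (by positivity)
          have : (A - -A) * (B - -B) = 4 * Real.sqrt t⁻¹ ^ 2 / (m₁ * m₂) := by
            rw [hA, hB]; ring
          rw [this, hs]; ring
        have hind1 : (Ioc (0:ℝ) 1).indicator (fun _ => (1:ℝ≥0∞)) t = 0 :=
          indicator_of_notMem (fun hm => absurd hm.2 (not_le.2 h)) _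
        have hind2 : (Ioo (1:ℝ) c₀⁻¹).indicator (fun t => ENNReal.ofReal (c / t)) t
            = ENNReal.ofReal (c / t) := indicator_of_mem (show t ∈ Ioo (1:ℝ) c₀⁻¹ from ⟨h, h'⟩) _
        rw [hind1, hind2, zero_add]
        calc ν {a | t < f a} ≤ ν (Ioo (-A) A ×ˢ Ioo (-B) B) := measure_mono hsub
          _ ≤ ENNReal.ofReal M * volume (Ioo (-A) A ×ˢ Ioo (-B) B) :=
              hνM _ (measurableSet_Ioo.prod measurableSet_Ioo)
          _ = ENNReal.ofReal (c / t) := by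
              rw [hvol, ← ENNReal.ofReal_mul hM]
              congr 1
              rw [hc]
              field_simp
      · have hempty : {a : ℝ × ℝ | t < f a} = ∅ :=
          eq_empty_of_forall_notMem fun a ha => absurd ha (not_lt.2 ((hfle a).trans h'))
        simp [hempty]
  have hmeas1 : Measurable ((Ioc (0:ℝ) 1).indicator (fun _ => (1:ℝ≥0∞))) :=
    measurable_const.indicator measurableSet_Ioc
  have hmeas2 : Measurable ((Ioo (1:ℝ) c₀⁻¹).indicator
      (fun t => ENNReal.ofReal (c / t))) :=
    (ENNReal.measurable_ofReal.comp (measurable_const.div measurable_id)).indicator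
      measurableSet_Ioo
  have h3 : ∫⁻ t in Ioi (0:ℝ), ν {a | t < f a}
      ≤ ∫⁻ t in Ioi (0:ℝ),
          ((Ioc (0:ℝ) 1).indicator (fun _ => (1:ℝ≥0∞)) t
            + (Ioo (1:ℝ) c₀⁻¹).indicator (fun t => ENNReal.ofReal (c / t)) t) :=
    setLIntegral_mono (hmeas1.add hmeas2) hbound
  have h1c : (1:ℝ) < c₀⁻¹ := (one_lt_inv₀ hc₀).2 (by linarith)
  have hIooIoi : Ioo (1:ℝ) c₀⁻¹ ∩ Ioi 0 = Ioo (1:ℝ) c₀⁻¹ :=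
    inter_eq_left.2 fun x hx => lt_trans one_pos hx.1
  have hint : IntegrableOn (fun t => c / t) (Ioo (1:ℝ) c₀⁻¹) := by
    refine (ContinuousOn.integrableOn_compact isCompact_Icc ?_).mono_set Ioo_subset_Icc_self
    exact continuousOn_const.div continuousOn_id fun x hx => by
      have := hx.1; intro h0; rw [h0] at this; linarith
  have hnn : 0 ≤ᵐ[volume.restrict (Ioo (1:ℝ) c₀⁻¹)] fun t => c / t :=
    (ae_restrict_iff' measurableSet_Ioo).2 (ae_of_all _ fun x hx =>
      div_nonneg hc0 (by linarith [hx.1]))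
  have hval : ∫ t in Ioo (1:ℝ) c₀⁻¹, c / t = c * |Real.log c₀| := by
    rw [← integral_Ioc_eq_integral_Ioo, ← intervalIntegral.integral_of_le h1c.le]
    have h0 : (0:ℝ) ∉ uIcc (1:ℝ) c₀⁻¹ := by
      rw [uIcc_of_le h1c.le]
      intro h0
      exact absurd h0.1 (by norm_num)
    simp only [div_eq_mul_inv]
    rw [intervalIntegral.integral_const_mul, integral_inv h0]
    have hlog : Real.log c₀ < 0 := Real.log_neg hc₀ (by linarith)
    rw [abs_of_neg hlog, div_one, Real.log_inv]
  have h4 : ∫⁻ t in Ioi (0:ℝ),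
        ((Ioc (0:ℝ) 1).indicator (fun _ => (1:ℝ≥0∞)) t
          + (Ioo (1:ℝ) c₀⁻¹).indicator (fun t => ENNReal.ofReal (c / t)) t)
      = 1 + ENNReal.ofReal (c * |Real.log c₀|) := by
    rw [lintegral_add_left hmeas1]
    congr 1
    · rw [lintegral_indicator measurableSet_Ioc, setLIntegral_one,
        Measure.restrict_apply measurableSet_Ioc,
        inter_eq_left.2 Ioc_subset_Ioi_self, Real.volume_Ioc]
      norm_num
    · rw [lintegral_indicator measurableSet_Ioo,
        Measure.restrict_restrict measurableSet_Ioo, hIooIoi,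
        ← ofReal_integral_eq_lintegral_ofReal hint hnn, hval]
  have hL : ∫⁻ p, ENNReal.ofReal (f p) ∂ν ≤ 1 + ENNReal.ofReal (c * |Real.log c₀|) := by
    rw [h2]; exact h3.trans (le_of_eq h4)
  have hfin : (1 + ENNReal.ofReal (c * |Real.log c₀|)) ≠ ⊤ := by
    simp [ENNReal.add_ne_top]
  have hmain := ENNReal.toReal_mono hfin hL
  rw [ENNReal.toReal_add (by simp) (by simp), ENNReal.toReal_one,
    ENNReal.toReal_ofReal (by positivity)] at hmain
  calc ∫ p, f p ∂ν = (∫⁻ p, ENNReal.ofReal (f p) ∂ν).toReal := h1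
    _ ≤ 1 + c * |Real.log c₀| := hmain
    _ = 1 + 4 * (M / (m₁ * m₂)) * |Real.log c₀| := by rw [hc, mul_div_assoc]
end
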